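/- In the migration model with strategy vector k, if k_i > 0 for every agent i, then the matrix M = -(K₁ + K₂L) is Hurwitz for any underlying graph Laplacian L; i.e., full positivity of investments guarantees the population can migrate regardless of network topology. -/

import Mathlib

open Matrix

/-- `M` is Hurwitz: every (complex) eigenvalue has strictly negative real part. -/
def IsHurwitz {N : ℕ} (M : Matrix (Fin N) (Fin N) ℝ) : Prop :=
  ∀ μ ∈ (M.map (Complex.ofReal)).charpoly.roots, μ.re < 0

lemma root_charpoly_hasEigenvalue {n : Type*} [Fintype n] [DecidableEq n]
    {B : Matrix n n ℂ} {μ : ℂ} (h : μ ∈ B.charpoly.roots) :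
    Module.End.HasEigenvalue (Matrix.toLin' B) μ := by
  have hroot : B.charpoly.IsRoot μ := (Polynomial.mem_roots B.charpoly_monic.ne_zero).mp h
  have hdet : (μ • (1 : Matrix n n ℂ) - B).det = 0 := by
    have h0 : Polynomial.eval μ B.charpoly = 0 := hroot
    rw [Matrix.charpoly] at h0
    rw [show Polynomial.eval μ (Matrix.det (charmatrix B))
        = ((charmatrix B).map (Polynomial.evalRingHom μ)).det from
      (RingHom.map_det (Polynomial.evalRingHom μ) (charmatrix B)).symm ▸ rfl] at h0
    convert h0 using 2
    ext i j
    by_cases hij : i = j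
    · subst hij; simp [Matrix.charmatrix_apply_eq]
    · simp [Matrix.charmatrix_apply_ne _ _ _ hij, Matrix.one_apply_ne hij]
  obtain ⟨v, hv0, hv⟩ := (Matrix.exists_mulVec_eq_zero_iff).mpr hdet
  refine Module.End.hasEigenvalue_of_hasEigenvector ⟨?_, hv0⟩
  rw [Module.End.mem_eigenspace_iff, Matrix.toLin'_apply]
  rw [Matrix.sub_mulVec, Matrix.smul_mulVec, Matrix.one_mulVec, sub_eq_zero] at hv
  exact hv.symm

/-- If every agent has strictly positive investment `k_i > 0`, then
`M = -(K₁ + K₂ L)` is Hurwitz for any underlying (row-normalized) graph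
Laplacian `L = diag(A·1) - A`: full positivity of investments guarantees the
population can migrate regardless of network topology. -/
theorem all_invested_implies_hurwitz
    (N : ℕ) (k : Fin N → ℝ) (hk0 : ∀ i, 0 < k i) (hk1 : ∀ i, k i ≤ 1)
    (A L K₁ K₂ M : Matrix (Fin N) (Fin N) ℝ)
    (hApos : ∀ i j, 0 ≤ A i j) (hAdiag : ∀ i, A i i = 0)
    (hArow : ∀ i, (∑ j, A i j = 0) ∨ (∑ j, A i j = 1))
    (hL : L = Matrix.diagonal (fun i => ∑ j, A i j) - A)
    (hK₁ : K₁ = Matrix.diagonal (fun i => (k i) ^ 2))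
    (hK₂ : K₂ = Matrix.diagonal (fun i => (1 - k i) ^ 2))
    (hM : M = -(K₁ + K₂ * L)) :
    IsHurwitz M := by
  intro μ hμ
  obtain ⟨i, hi⟩ := eigenvalue_mem_ball (root_charpoly_hasEigenvalue hμ)
  rw [Metric.mem_closedBall, Complex.dist_eq] at hi
  set s : ℝ := ∑ j, A i j with hs
  have hdiag : M i i = -(k i ^ 2 + (1 - k i) ^ 2 * s) := by
    subst hM hL hK₁ hK₂
    simp [Matrix.neg_apply, Matrix.add_apply, Matrix.diagonal_mul, Matrix.sub_apply,
      Matrix.diagonal_apply_eq, hAdiag i, ← hs]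
  have hoff : ∀ j, j ≠ i → M i j = (1 - k i) ^ 2 * A i j := by
    intro j hj
    subst hM hL hK₁ hK₂
    simp [Matrix.neg_apply, Matrix.add_apply, Matrix.diagonal_mul, Matrix.sub_apply,
      Matrix.diagonal_apply_ne _ (Ne.symm hj)]
  have hRsum : (∑ j ∈ Finset.univ.erase i, ‖(M.map Complex.ofReal) i j‖)
      = (1 - k i) ^ 2 * s := by
    rw [show (∑ j ∈ Finset.univ.erase i, ‖(M.map Complex.ofReal) i j‖)
        = ∑ j ∈ Finset.univ.erase i, (1 - k i) ^ 2 * A i j from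
      Finset.sum_congr rfl (fun j hj => by
        rw [Matrix.map_apply, Complex.norm_real, Real.norm_eq_abs,
          hoff j (Finset.ne_of_mem_erase hj),
          abs_of_nonneg (mul_nonneg (sq_nonneg _) (hApos i j))])]
    rw [Finset.sum_erase _ (by rw [hAdiag i, mul_zero]), ← Finset.mul_sum, ← hs]
  have hBii : (M.map Complex.ofReal) i i = (M i i : ℂ) := rfl
  rw [hBii, hRsum] at hi
  have hre : μ.re - M i i ≤ (1 - k i) ^ 2 * s := by
    calc μ.re - M i i = (μ - (M i i : ℂ)).re := by simp
    _ ≤ ‖μ - (M i i : ℂ)‖ := Complex.re_le_norm _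
    _ ≤ (1 - k i) ^ 2 * s := hi
  have : μ.re ≤ -(k i ^ 2) := by rw [hdiag] at hre; linarith
  have hki : 0 < k i ^ 2 := pow_pos (hk0 i) 2
  linarith
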